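/- arXiv:1409.7790 — 3 statements merged into one kernel-verified Lean document; each statement's English description precedes it below -/
import Mathlib

section
/- Let K be a field, let S ⊆ K be a finite set with |S| ≥ t+1, and let P ∈ K[x_1,...,x_n] be a polynomial in which every variable x_i has individual degree at most t. Then P is the zero polynomial if and only if P(a) = 0 for every point a ∈ S^n. -/
open MvPolynomial

lemma combinatorial_nullstellensatz_weak_aux
    {K : Type*} [Field K] {t : ℕ} (S : Finset K) (hS : t + 1 ≤ S.card) :
    ∀ n (P : MvPolynomial (Fin n) K), (∀ i : Fin n, degreeOf i P ≤ t) →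
      (∀ a : Fin n → K, (∀ i, a i ∈ S) → eval a P = 0) → P = 0 := by
  intro n
  induction n with
  | zero =>
    intro P _ hz
    have h := hz (fun i => i.elim0) (fun i => i.elim0)
    have : (isEmptyAlgEquiv K (Fin 0)) P = 0 := by
      rw [← h]; conv_rhs => rw [← (isEmptyAlgEquiv K (Fin 0)).symm_apply_apply P, isEmptyAlgEquiv_symm_apply, eval_C]
    simpa using (isEmptyAlgEquiv K (Fin 0)).injective (by simpa using this)
  | succ n ih =>
    intro P hdeg hz
    set Q := finSuccEquiv K n P with hQ
    have hcoeff : ∀ j : ℕ, Q.coeff j = 0 := by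
      intro j
      apply ih _ (fun i => (degreeOf_coeff_finSuccEquiv P i j).trans (hdeg i.succ))
      intro a ha
      have hmap : (Q.map (eval a)) = 0 := by
        apply Polynomial.eq_zero_of_natDegree_lt_card_of_eval_eq_zero' _ S
        · intro y hy
          rw [← eval_eq_eval_mv_eval']
          exact hz _ (fun i => Fin.cases hy ha i)
        · calc (Q.map (eval a)).natDegree ≤ Q.natDegree := Polynomial.natDegree_map_le
            _ = degreeOf 0 P := natDegree_finSuccEquiv P
            _ ≤ t := hdeg 0
            _ < S.card := hS
      have := congrArg (fun q => Polynomial.coeff q j) hmap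
      simpa using this
    have hQ0 : Q = 0 := Polynomial.ext fun j => by simp [hcoeff j]
    exact (finSuccEquiv K n).injective (by rw [← hQ, hQ0, map_zero])

/-- Combinatorial Nullstellensatz (weak form): if every variable has individual
degree at most `t` in `P`, and `S` is a finite set with at least `t+1` elements,
then `P = 0` iff `P` vanishes on `S^n`. -/
theorem combinatorial_nullstellensatz_weak
    {K : Type*} [Field K] {n t : ℕ} (S : Finset K) (hS : t + 1 ≤ S.card)
    (P : MvPolynomial (Fin n) K) (hdeg : ∀ i : Fin n, MvPolynomial.degreeOf i P ≤ t) :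
    P = 0 ↔ ∀ a : Fin n → K, (∀ i, a i ∈ S) → MvPolynomial.eval a P = 0 := by
  constructor
  · rintro rfl a _; simp
  · exact combinatorial_nullstellensatz_weak_aux S hS n P hdeg
end

section
/- Let K be a field, f ∈ K[x_1,...,x_n] a polynomial of total degree at most k, and S ⊆ K a finite set containing 0 with |S| ≥ k+1. If f(a) = 0 for every vector a ∈ S^n having at most k nonzero coordinates, then f is the zero polynomial. -/
open Polynomial in
lemma key_univ {K : Type*} [Field K] [DecidableEq K] (T : Finset K) (t : ℕ) (ht : t < T.card) :
    ∑ a ∈ T, a ^ t * ∏ b ∈ T.erase a, (a - b)⁻¹ = if t = T.card - 1 then 1 else 0 := by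
  have hinj : Set.InjOn (id : K → K) T := fun x _ y _ h => h
  have hX : (X ^ t : K[X]) = Lagrange.interpolate T id (fun a => a ^ t) := by
    have := Lagrange.eq_interpolate (f := (X ^ t : K[X])) hinj
      (by simpa [Polynomial.degree_X_pow] using (WithBot.coe_lt_coe.mpr ht))
    simpa using this
  have := congrArg (fun p : K[X] => p.coeff (T.card - 1)) hX
  simp only [Polynomial.coeff_X_pow] at this
  rw [Lagrange.interpolate_apply] at this
  rw [Polynomial.finset_sum_coeff] at this
  have hcoeff : ∀ a ∈ T, (Polynomial.C (a ^ t) * Lagrange.basis T id a).coeff (T.card - 1)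
      = a ^ t * ∏ b ∈ T.erase a, (a - b)⁻¹ := by
    intro a ha
    rw [Polynomial.coeff_C_mul]
    congr 1
    rw [Lagrange.basis_eq_prod_sub_inv_mul_nodal_div ha, ← Lagrange.nodal_erase_eq_nodal_div ha,
      Polynomial.coeff_C_mul]
    have hmonic : (Lagrange.nodal (T.erase a) id).Monic := Lagrange.nodal_monic
    have hdeg : (Lagrange.nodal (T.erase a) id).natDegree = T.card - 1 := by
      rw [Lagrange.natDegree_nodal, Finset.card_erase_of_mem ha]
    rw [← hdeg, hmonic.coeff_natDegree, mul_one, Lagrange.nodalWeight]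
    simp
  rw [Finset.sum_congr rfl hcoeff] at this
  rw [← this]
  by_cases h : t = T.card - 1 <;> simp [h, eq_comm]

/-- A polynomial of total degree at most `k` vanishing on all points of `S^n`
of Hamming weight at most `k` (where `0 ∈ S`, `|S| ≥ k+1`) is the zero polynomial. -/
theorem vanishing_on_low_weight_points
    {K : Type*} [Field K] [DecidableEq K] {n k : ℕ} (S : Finset K) (h0 : (0 : K) ∈ S)
    (hS : k + 1 ≤ S.card)
    (f : MvPolynomial (Fin n) K) (hdeg : f.totalDegree ≤ k)
    (hvan : ∀ a : Fin n → K, (∀ i, a i ∈ S) →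
      (Finset.univ.filter (fun i => a i ≠ 0)).card ≤ k →
      MvPolynomial.eval a f = 0) :
    f = 0 := by
  by_contra hf
  -- pick a monomial m of maximal total degree
  have hsupp : f.support.Nonempty := MvPolynomial.support_nonempty.mpr hf
  obtain ⟨m, hm, hmax⟩ := Finset.exists_mem_eq_sup f.support hsupp
    (fun s => s.sum fun _ e => e)
  have hmd : (m.sum fun _ e => e) = f.totalDegree := hmax.symm
  -- choose grids
  have hTex : ∀ i : Fin n, ∃ T : Finset K, T ⊆ S ∧ (0 : K) ∈ T ∧ T.card = m i + 1 := by
    intro i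
    have hmi : m i ≤ k := by
      have h1 : m i ≤ m.sum fun _ e => e := by
        rw [Finsupp.sum]
        rcases eq_or_ne (m i) 0 with h | h
        · simp [h]
        · exact Finset.single_le_sum (fun j _ => Nat.zero_le _) (Finsupp.mem_support_iff.mpr h)
      exact h1.trans (hmd ▸ hdeg)
    have : m i ≤ (S.erase 0).card := by
      rw [Finset.card_erase_of_mem h0]; omega
    obtain ⟨t, hts, htc⟩ := Finset.exists_subset_card_eq this
    refine ⟨insert 0 t, ?_, Finset.mem_insert_self _ _, ?_⟩
    · exact Finset.insert_subset h0 (hts.trans (Finset.erase_subset _ _))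
    · rw [Finset.card_insert_of_notMem (fun h => (Finset.mem_erase.mp (hts h)).1 rfl), htc]
  choose T hTS hT0 hTc using hTex
  -- the weighted sum over the grid
  set w : ∀ _ : Fin n, K → K := fun i c => ∏ b ∈ (T i).erase c, (c - b)⁻¹ with hw
  have key : ∑ a ∈ Fintype.piFinset T, (MvPolynomial.eval a f) * ∏ i, w i (a i)
      = MvPolynomial.coeff m f := by
    have expand : ∀ a : Fin n → K, MvPolynomial.eval a f
        = ∑ t ∈ f.support, MvPolynomial.coeff t f * ∏ i, a i ^ t i :=
      fun a => MvPolynomial.eval_eq' a f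
    calc ∑ a ∈ Fintype.piFinset T, (MvPolynomial.eval a f) * ∏ i, w i (a i)
        = ∑ t ∈ f.support, MvPolynomial.coeff t f *
            ∑ a ∈ Fintype.piFinset T, ∏ i, (a i ^ t i * w i (a i)) := by
          have step : ∀ a ∈ Fintype.piFinset T, (MvPolynomial.eval a f) * ∏ i, w i (a i)
              = ∑ t ∈ f.support, MvPolynomial.coeff t f * ∏ i, (a i ^ t i * w i (a i)) := by
            intro a _
            rw [expand a, Finset.sum_mul]
            refine Finset.sum_congr rfl fun t _ => ?_
            rw [mul_assoc, ← Finset.prod_mul_distrib]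
          rw [Finset.sum_congr rfl step, Finset.sum_comm]
          exact Finset.sum_congr rfl fun t _ => (Finset.mul_sum _ _ _).symm
      _ = ∑ t ∈ f.support, MvPolynomial.coeff t f *
            ∏ i, ∑ c ∈ T i, (c ^ t i * w i c) := by
          refine Finset.sum_congr rfl fun t _ => ?_
          rw [Finset.prod_univ_sum]
      _ = MvPolynomial.coeff m f := by
          rw [Finset.sum_eq_single m ?_ (fun h => absurd hm h)]
          · have : ∀ i : Fin n, ∑ c ∈ T i, (c ^ m i * w i c) = 1 := by
              intro i
              rw [key_univ (T i) (m i) (by rw [hTc i]; omega)]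
              rw [hTc i]
              simp
            rw [Finset.prod_congr rfl fun i _ => this i, Finset.prod_const_one, mul_one]
          · intro t ht htm
            have hts : (t.sum fun _ e => e) ≤ m.sum fun _ e => e := by
              rw [hmd]; exact MvPolynomial.le_totalDegree ht
            have hj : ∃ j, t j < m j := by
              by_contra hc
              push_neg at hc
              have hsum : ∀ q : Fin n →₀ ℕ, (q.sum fun _ e => e) = ∑ j : Fin n, q j :=
                fun q => Finsupp.sum_fintype _ _ (fun _ => rfl)
              rw [hsum, hsum] at hts
              have hle := Finset.sum_le_sum (fun j (_ : j ∈ Finset.univ) => hc j)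
              have heq : ∑ j : Fin n, m j = ∑ j : Fin n, t j := le_antisymm hle hts
              have := (Finset.sum_eq_sum_iff_of_le (fun j _ => hc j)).mp heq
              exact htm (Finsupp.ext fun j => ((this j (Finset.mem_univ j)).symm))
            obtain ⟨j, hj⟩ := hj
            have : ∑ c ∈ T j, (c ^ t j * w j c) = 0 := by
              rw [key_univ (T j) (t j) (by rw [hTc j]; omega), hTc j]
              simp only [Nat.add_sub_cancel]
              rw [if_neg (by omega)]
            rw [Finset.prod_eq_zero (Finset.mem_univ j) this, mul_zero]
  -- LHS is zero
  have lhs0 : ∑ a ∈ Fintype.piFinset T, (MvPolynomial.eval a f) * ∏ i, w i (a i) = 0 := by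
    refine Finset.sum_eq_zero fun a ha => ?_
    rw [Fintype.mem_piFinset] at ha
    rw [hvan a (fun i => hTS i (ha i)) ?_, zero_mul]
    -- weight bound
    have hsub : (Finset.univ.filter (fun i => a i ≠ 0)) ⊆ m.support := by
      intro i hi
      rw [Finset.mem_filter] at hi
      rw [Finsupp.mem_support_iff]
      intro hmi
      have : (T i).card = 1 := by rw [hTc i, hmi]
      have := Finset.card_le_one.mp this.le (a i) (ha i) 0 (hT0 i)
      exact hi.2 this
    calc (Finset.univ.filter (fun i => a i ≠ 0)).card ≤ m.support.card :=
          Finset.card_le_card hsub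
      _ ≤ m.sum fun _ e => e := by
          rw [Finsupp.sum]
          calc m.support.card = ∑ i ∈ m.support, 1 := by simp
            _ ≤ ∑ i ∈ m.support, m i := Finset.sum_le_sum fun i hi =>
                Nat.one_le_iff_ne_zero.mpr (Finsupp.mem_support_iff.mp hi)
      _ ≤ k := hmd ▸ hdeg
  rw [key] at lhs0
  exact (MvPolynomial.mem_support_iff.mp hm) lhs0
end

section
/- Let K be a field with distinct elements a_1,...,a_n, and define the Shpilka–Volkovich generator G_k = (G_k^1,...,G_k^n) where G_k^i(y_1,...,y_k,z_1,...,z_k) = Σ_{j=1}^k L_i(y_j)·z_j and L_i is the Lagrange basis polynomial for the points a_1,...,a_n. Then for every finite set S ⊆ K, every vector in S^n with at most k nonzero coordinates lies in the image { (G_k^1(α),...,G_k^n(α)) : α ∈ (S ∪ {a_1,...,a_n})^{2k} }. -/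
/-- The image of the Shpilka–Volkovich generator `G_k` on `(S ∪ {a_1,...,a_n})^{2k}`
contains every vector of `S^n` of Hamming weight at most `k` (with `0 ∈ S`). -/
theorem sv_generator_image_contains_low_weight
    {K : Type*} [Field K] [DecidableEq K] {n k : ℕ} (a : Fin n → K) (ha : Function.Injective a)
    (S : Finset K) (h0 : (0 : K) ∈ S)
    (v : Fin n → K) (hvS : ∀ i, v i ∈ S)
    (hwt : (Finset.univ.filter (fun i => v i ≠ 0)).card ≤ k) :
    ∃ y z : Fin k → K,
      (∀ j, y j ∈ S ∪ Finset.image a Finset.univ) ∧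
      (∀ j, z j ∈ S ∪ Finset.image a Finset.univ) ∧
      (∀ i : Fin n,
        v i = ∑ j : Fin k,
          ((∏ l ∈ Finset.univ.erase i, (y j - a l)) /
            (∏ l ∈ Finset.univ.erase i, (a i - a l))) * z j) := by
  classical
  set T : Finset (Fin n) := Finset.univ.filter (fun i => v i ≠ 0) with hT
  set d : ℕ := T.card with hd
  let e := T.orderIsoOfFin rfl
  refine ⟨fun j => if h : (j : ℕ) < d then a (e ⟨j, h⟩) else 0,
          fun j => if h : (j : ℕ) < d then v (e ⟨j, h⟩) else 0, ?_, ?_, ?_⟩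
  · intro j
    by_cases h : (j : ℕ) < d
    · simp only [dif_pos h]
      exact Finset.mem_union_right _ (Finset.mem_image_of_mem a (Finset.mem_univ _))
    · simp only [dif_neg h]
      exact Finset.mem_union_left _ h0
  · intro j
    by_cases h : (j : ℕ) < d
    · simp only [dif_pos h]
      exact Finset.mem_union_left _ (hvS _)
    · simp only [dif_neg h]
      exact Finset.mem_union_left _ h0
  · intro i
    have hD : (∏ l ∈ Finset.univ.erase i, (a i - a l)) ≠ 0 := by
      rw [Finset.prod_ne_zero_iff]
      intro l hl
      exact sub_ne_zero.mpr (fun hh => (Finset.ne_of_mem_erase hl) (ha hh).symm)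
    by_cases hi : i ∈ T
    · -- the index hitting i
      have hlt : ((e.symm ⟨i, hi⟩ : Fin d) : ℕ) < k :=
        lt_of_lt_of_le (e.symm ⟨i, hi⟩).isLt hwt
      set j0 : Fin k := ⟨(e.symm ⟨i, hi⟩ : Fin d), hlt⟩ with hj0
      rw [Finset.sum_eq_single_of_mem j0 (Finset.mem_univ _)]
      · have h0lt : ((j0 : ℕ) : ℕ) < d := (e.symm ⟨i, hi⟩).isLt
        have hee : e ⟨(j0 : ℕ), h0lt⟩ = ⟨i, hi⟩ := by
          have : (⟨(j0 : ℕ), h0lt⟩ : Fin d) = e.symm ⟨i, hi⟩ := by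
            ext; simp [hj0]
          rw [this]; exact e.apply_symm_apply _
        simp only [dif_pos h0lt, hee, div_mul_eq_mul_div, eq_div_iff hD]
        ring
      · intro j _ hj
        by_cases h : (j : ℕ) < d
        · simp only [dif_pos h]
          have hne : ((e ⟨j, h⟩ : {x // x ∈ T}) : Fin n) ≠ i := by
            intro hh
            apply hj
            have hsub : (⟨i, hi⟩ : {x // x ∈ T}) = e ⟨j, h⟩ := Subtype.ext hh.symm
            have : (⟨j, h⟩ : Fin d) = e.symm ⟨i, hi⟩ := by
              rw [hsub, e.symm_apply_apply]
            ext
            simp [hj0, ← this]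
          have : (∏ l ∈ Finset.univ.erase i, (a (e ⟨j, h⟩) - a l)) = 0 :=
            Finset.prod_eq_zero (Finset.mem_erase.mpr ⟨hne, Finset.mem_univ _⟩) (by simp)
          simp [this]
        · simp [dif_neg h]
    · have hv0 : v i = 0 := by
        by_contra hh
        exact hi (Finset.mem_filter.mpr ⟨Finset.mem_univ _, hh⟩)
      rw [hv0]
      refine (Finset.sum_eq_zero ?_).symm
      intro j _
      by_cases h : (j : ℕ) < d
      · simp only [dif_pos h]
        have hne : ((e ⟨j, h⟩ : {x // x ∈ T}) : Fin n) ≠ i := by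
          intro hh
          exact hi (hh ▸ (e ⟨j, h⟩).2)
        have : (∏ l ∈ Finset.univ.erase i, (a (e ⟨j, h⟩) - a l)) = 0 :=
          Finset.prod_eq_zero (Finset.mem_erase.mpr ⟨hne, Finset.mem_univ _⟩) (by simp)
        simp [this]
      · simp [dif_neg h]
end
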